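/- Let R be a discrete valuation ring with maximal ideal 𝔪 generated by a uniformizer ϖ and finite residue field of odd cardinality q. Let I = {g ∈ GL₂(R) : g₂₁ ∈ 𝔪} be the Iwahori subgroup, let T = {!![a, b; ϖ·b, a] : a ∈ Rˣ, b ∈ R} (the unit group of the ramified quadratic order, a subgroup of I), and for j ≥ 1 let V^j = {g ∈ GL₂(R) : g₁₁ − 1 ∈ 𝔪^{⌈j/2⌉}, g₂₂ − 1 ∈ 𝔪^{⌈j/2⌉}, g₁₂ ∈ 𝔪^{⌊j/2⌋}, g₂₁ ∈ 𝔪^{⌊j/2⌋+1}}. Then for every i ≥ 1, the set T·V^i is a subgroup of I (since V^i is normal in I), and its index in I equals (q − 1)·q^{i−1}. -/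

import Mathlib

set_option linter.unusedSectionVars false
set_option linter.unreachableTactic false
set_option linter.unusedTactic false
set_option maxHeartbeats 1000000


open IsLocalRing Matrix Pointwise

variable (R : Type*) [CommRing R] [IsLocalRing R]

/-- The Iwahori subgroup of `GL₂(R)`: invertible matrices whose lower-left entry lies in
the maximal ideal. -/
def iwahori : Subgroup (GL (Fin 2) R) where
  carrier := {g : GL (Fin 2) R | (g : Matrix (Fin 2) (Fin 2) R) 1 0 ∈ maximalIdeal R}
  one_mem' := by simp
  mul_mem' := by
    intro a b ha hb
    show (↑(a * b) : Matrix (Fin 2) (Fin 2) R) 1 0 ∈ maximalIdeal R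
    rw [Matrix.GeneralLinearGroup.coe_mul, Matrix.mul_apply, Fin.sum_univ_two]
    exact add_mem (Ideal.mul_mem_right _ _ ha) (Ideal.mul_mem_left _ _ hb)
  inv_mem' := by
    intro a ha
    show (↑(a⁻¹) : Matrix (Fin 2) (Fin 2) R) 1 0 ∈ maximalIdeal R
    rw [Matrix.GeneralLinearGroup.coe_inv, Matrix.inv_def, Matrix.smul_apply,
      Matrix.adjugate_fin_two]
    simp only [Matrix.cons_val', Matrix.cons_val_zero, Matrix.cons_val_one, Matrix.head_cons,
      Matrix.empty_val', Matrix.cons_val_fin_one, Matrix.head_fin_const, smul_eq_mul]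
    exact Ideal.mul_mem_left _ _ (neg_mem ha)

/-- The set `Vʲ = 1 + (rad 𝒥)ʲ` in `GL₂(R)`, where `𝒥` is the Iwahori order:
matrices `g` with `g₁₁ - 1, g₂₂ - 1 ∈ 𝔪^⌈j/2⌉`, `g₁₂ ∈ 𝔪^⌊j/2⌋` and `g₂₁ ∈ 𝔪^(⌊j/2⌋+1)`. -/
def iwahoriFiltration (R : Type*) [CommRing R] [IsLocalRing R] (j : ℕ) :
    Set (GL (Fin 2) R) :=
  {g : GL (Fin 2) R |
    (g : Matrix (Fin 2) (Fin 2) R) 0 0 - 1 ∈ maximalIdeal R ^ ((j + 1) / 2) ∧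
    (g : Matrix (Fin 2) (Fin 2) R) 1 1 - 1 ∈ maximalIdeal R ^ ((j + 1) / 2) ∧
    (g : Matrix (Fin 2) (Fin 2) R) 0 1 ∈ maximalIdeal R ^ (j / 2) ∧
    (g : Matrix (Fin 2) (Fin 2) R) 1 0 ∈ maximalIdeal R ^ (j / 2 + 1)}

/-- The unit group of the ramified quadratic order inside the Iwahori subgroup:
invertible matrices of the shape `!![a, b; ϖ·b, a]` with `a` a unit. -/
def ramifiedTorus (R : Type*) [CommRing R] (ϖ : R) : Set (GL (Fin 2) R) :=
  {g : GL (Fin 2) R |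
    ∃ (a : Rˣ) (b : R), (g : Matrix (Fin 2) (Fin 2) R) = !![(a : R), b; ϖ * b, (a : R)]}


open IsLocalRing Matrix Pointwise

namespace IndexAux

variable {R : Type*} [CommRing R]

section LocalLemmas
variable [IsLocalRing R]

theorem isUnit_add_of_mem {u z : R} (hu : IsUnit u) (hz : z ∈ maximalIdeal R) :
    IsUnit (u + z) := by
  by_contra h
  have h1 : u + z ∈ maximalIdeal R := (mem_maximalIdeal _).2 (mem_nonunits_iff.2 h)
  have h2 : u ∈ maximalIdeal R := by simpa using sub_mem h1 hz
  exact mem_nonunits_iff.1 ((mem_maximalIdeal _).1 h2) hu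

theorem isUnit_of_mk_isUnit {k : ℕ} (hk : 1 ≤ k) {a : R}
    (h : IsUnit (Ideal.Quotient.mk (maximalIdeal R ^ k) a)) : IsUnit a := by
  obtain ⟨c, hc⟩ := h.exists_right_inv
  obtain ⟨b, rfl⟩ := Ideal.Quotient.mk_surjective c
  rw [← _root_.map_mul, ← map_one (Ideal.Quotient.mk (maximalIdeal R ^ k))] at hc
  have h1 : a * b - 1 ∈ maximalIdeal R ^ k := (Ideal.Quotient.mk_eq_mk_iff_sub_mem _ _).1 hc
  have hm : a * b - 1 ∈ maximalIdeal R := Ideal.pow_le_self (by omega) h1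
  have h2 : IsUnit (1 + (a * b - 1)) := isUnit_add_of_mem isUnit_one hm
  have h3 : (1 : R) + (a * b - 1) = a * b := by ring
  rw [h3] at h2
  exact isUnit_of_mul_isUnit_left h2

theorem isUnit_entries {g : GL (Fin 2) R}
    (hg : (g : Matrix (Fin 2) (Fin 2) R) 1 0 ∈ maximalIdeal R) :
    IsUnit ((g : Matrix (Fin 2) (Fin 2) R) 0 0) ∧
      IsUnit ((g : Matrix (Fin 2) (Fin 2) R) 1 1) := by
  set A := (g : Matrix (Fin 2) (Fin 2) R) with hA
  have hdet : IsUnit A.det := (Matrix.isUnit_iff_isUnit_det _).1 g.isUnit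
  rw [Matrix.det_fin_two] at hdet
  have h2 : IsUnit (A 0 0 * A 1 1 - A 0 1 * A 1 0 + A 0 1 * A 1 0) :=
    isUnit_add_of_mem hdet (Ideal.mul_mem_left _ _ hg)
  rw [sub_add_cancel] at h2
  exact ⟨isUnit_of_mul_isUnit_left h2, isUnit_of_mul_isUnit_right h2⟩

theorem mem_mul_pow {I : Ideal R} {a b c : ℕ} (h : c ≤ a + b) {x y : R}
    (hx : x ∈ I ^ a) (hy : y ∈ I ^ b) : x * y ∈ I ^ c := by
  have h1 := Ideal.mul_mem_mul hx hy
  rw [← pow_add] at h1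
  exact Ideal.pow_le_pow_right h h1

theorem mem_pow_le {I : Ideal R} {a b : ℕ} (h : b ≤ a) {x : R} (hx : x ∈ I ^ a) : x ∈ I ^ b :=
  Ideal.pow_le_pow_right h hx

/-- The entrywise ideal pattern of the `(m,n)`-th radical power of the Iwahori order. -/
def entP (m n : ℕ) (ξ : Matrix (Fin 2) (Fin 2) R) : Prop :=
  ξ 0 0 ∈ maximalIdeal R ^ m ∧ ξ 0 1 ∈ maximalIdeal R ^ n ∧
    ξ 1 0 ∈ maximalIdeal R ^ (n + 1) ∧ ξ 1 1 ∈ maximalIdeal R ^ m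

theorem entP.add {m n : ℕ} {ξ η : Matrix (Fin 2) (Fin 2) R} (hξ : entP m n ξ)
    (hη : entP m n η) : entP m n (ξ + η) := by
  obtain ⟨a1, a2, a3, a4⟩ := hξ; obtain ⟨b1, b2, b3, b4⟩ := hη
  exact ⟨add_mem a1 b1, add_mem a2 b2, add_mem a3 b3, add_mem a4 b4⟩

theorem entP.neg {m n : ℕ} {ξ : Matrix (Fin 2) (Fin 2) R} (hξ : entP m n ξ) :
    entP m n (-ξ) := by
  obtain ⟨a1, a2, a3, a4⟩ := hξ
  exact ⟨neg_mem a1, neg_mem a2, neg_mem a3, neg_mem a4⟩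

theorem entP.mul_left {m n : ℕ} {ξ : Matrix (Fin 2) (Fin 2) R} (hξ : entP m n ξ)
    (hmn : n ≤ m) (hm1 : m ≤ n + 1) {A : Matrix (Fin 2) (Fin 2) R}
    (hA : A 1 0 ∈ maximalIdeal R) : entP m n (A * ξ) := by
  obtain ⟨h00, h01, h10, h11⟩ := hξ
  have top : ∀ x : R, x ∈ maximalIdeal R ^ 0 := by simp
  have hA' : A 1 0 ∈ maximalIdeal R ^ 1 := by simpa using hA
  refine ⟨?_, ?_, ?_, ?_⟩ <;> rw [show (A * ξ) = A * ξ from rfl, Matrix.mul_apply, Fin.sum_univ_two]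
  · exact add_mem (mem_mul_pow (by omega) (top _) h00) (mem_mul_pow (by omega) (top _) h10)
  · exact add_mem (mem_mul_pow (by omega) (top _) h01) (mem_mul_pow (by omega) (top _) h11)
  · exact add_mem (mem_mul_pow (by omega) hA' h00) (mem_mul_pow (by omega) (top _) h10)
  · exact add_mem (mem_mul_pow (by omega) hA' h01) (mem_mul_pow (by omega) (top _) h11)

theorem entP.mul_right {m n : ℕ} {ξ : Matrix (Fin 2) (Fin 2) R} (hξ : entP m n ξ)
    (hmn : n ≤ m) (hm1 : m ≤ n + 1) {A : Matrix (Fin 2) (Fin 2) R}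
    (hA : A 1 0 ∈ maximalIdeal R) : entP m n (ξ * A) := by
  obtain ⟨h00, h01, h10, h11⟩ := hξ
  have top : ∀ x : R, x ∈ maximalIdeal R ^ 0 := by simp
  have hA' : A 1 0 ∈ maximalIdeal R ^ 1 := by simpa using hA
  refine ⟨?_, ?_, ?_, ?_⟩ <;> rw [Matrix.mul_apply, Fin.sum_univ_two]
  · exact add_mem (mem_mul_pow (by omega) h00 (top _)) (mem_mul_pow (by omega) h01 hA')
  · exact add_mem (mem_mul_pow (by omega) h00 (top _)) (mem_mul_pow (by omega) h01 (top _))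
  · exact add_mem (mem_mul_pow (by omega) h10 (top _)) (mem_mul_pow (by omega) h11 hA')
  · exact add_mem (mem_mul_pow (by omega) h10 (top _)) (mem_mul_pow (by omega) h11 (top _))

end LocalLemmas

end IndexAux
namespace IndexAux

section Filt
variable {R : Type*} [CommRing R] [IsLocalRing R]

theorem mem_iwahori_iff {g : GL (Fin 2) R} :
    g ∈ iwahori R ↔ (g : Matrix (Fin 2) (Fin 2) R) 1 0 ∈ maximalIdeal R := Iff.rfl

theorem mem_filtration_iff {i : ℕ} {g : GL (Fin 2) R} :
    g ∈ iwahoriFiltration R i ↔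
      entP ((i + 1) / 2) (i / 2) ((g : Matrix (Fin 2) (Fin 2) R) - 1) := by
  have e00 : (1 : Matrix (Fin 2) (Fin 2) R) 0 0 = 1 := by simp
  have e11 : (1 : Matrix (Fin 2) (Fin 2) R) 1 1 = 1 := by simp
  have e01 : (1 : Matrix (Fin 2) (Fin 2) R) 0 1 = 0 := by simp
  have e10 : (1 : Matrix (Fin 2) (Fin 2) R) 1 0 = 0 := by simp
  simp only [iwahoriFiltration, Set.mem_setOf_eq, entP, Matrix.sub_apply, e00, e11, e01, e10,
    sub_zero]
  tauto

theorem filtration_subset_iwahori {i : ℕ} {g : GL (Fin 2) R}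
    (hg : g ∈ iwahoriFiltration R i) : g ∈ iwahori R := by
  rw [mem_filtration_iff] at hg
  obtain ⟨-, -, h10, -⟩ := hg
  rw [mem_iwahori_iff]
  have : ((g : Matrix (Fin 2) (Fin 2) R) - 1) 1 0 = (g : Matrix (Fin 2) (Fin 2) R) 1 0 := by
    simp [Matrix.sub_apply]
  rw [this] at h10
  have h := mem_pow_le (a := i / 2 + 1) (b := 1) (by omega) h10
  simpa using h

theorem inv_mul_mem_filtration_iff {i : ℕ} {a b : GL (Fin 2) R} (ha : a ∈ iwahori R) :
    a⁻¹ * b ∈ iwahoriFiltration R i ↔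
      entP ((i + 1) / 2) (i / 2)
        ((b : Matrix (Fin 2) (Fin 2) R) - (a : Matrix (Fin 2) (Fin 2) R)) := by
  have hmn : i / 2 ≤ (i + 1) / 2 := by omega
  have hm1 : (i + 1) / 2 ≤ i / 2 + 1 := by omega
  rw [mem_filtration_iff]
  constructor
  · intro h
    have heq : (b : Matrix (Fin 2) (Fin 2) R) - (a : Matrix (Fin 2) (Fin 2) R)
        = (a : Matrix (Fin 2) (Fin 2) R) * ((↑(a⁻¹ * b) : Matrix (Fin 2) (Fin 2) R) - 1) := by
      rw [mul_sub, mul_one, ← Units.val_mul, mul_inv_cancel_left]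
    rw [heq]
    exact h.mul_left hmn hm1 ha
  · intro h
    have heq : (↑(a⁻¹ * b) : Matrix (Fin 2) (Fin 2) R) - 1
        = (↑(a⁻¹) : Matrix (Fin 2) (Fin 2) R)
            * ((b : Matrix (Fin 2) (Fin 2) R) - (a : Matrix (Fin 2) (Fin 2) R)) := by
      rw [mul_sub, ← Units.val_mul, ← Units.val_mul, inv_mul_cancel, Units.val_one]
    rw [heq]
    exact h.mul_left hmn hm1 ((iwahori R).inv_mem ha)

/-- `Vⁱ` as a subgroup of `GL₂(R)`. -/
def filtSubgroup (R : Type*) [CommRing R] [IsLocalRing R] (i : ℕ) :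
    Subgroup (GL (Fin 2) R) where
  carrier := iwahoriFiltration R i
  one_mem' := by
    show (1 : GL (Fin 2) R) ∈ iwahoriFiltration R i
    rw [mem_filtration_iff]
    refine ⟨?_, ?_, ?_, ?_⟩ <;> simp
  mul_mem' := by
    intro x y hx hy
    have hx' := mem_filtration_iff.1 hx
    have hy' := mem_filtration_iff.1 hy
    show x * y ∈ iwahoriFiltration R i
    rw [mem_filtration_iff]
    have hmn : i / 2 ≤ (i + 1) / 2 := by omega
    have hm1 : (i + 1) / 2 ≤ i / 2 + 1 := by omega
    have hy10 : (y : Matrix (Fin 2) (Fin 2) R) 1 0 ∈ maximalIdeal R :=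
      mem_iwahori_iff.1 (filtration_subset_iwahori hy)
    clear hx hy
    have heq : (↑(x * y) : Matrix (Fin 2) (Fin 2) R) - 1
        = ((x : Matrix (Fin 2) (Fin 2) R) - 1) * (y : Matrix (Fin 2) (Fin 2) R)
          + ((y : Matrix (Fin 2) (Fin 2) R) - 1) := by
      rw [Units.val_mul]; noncomm_ring
    rw [heq]
    exact (hx'.mul_right hmn hm1 hy10).add hy'
  inv_mem' := by
    intro x hx
    have hx' := mem_filtration_iff.1 hx
    show x⁻¹ ∈ iwahoriFiltration R i
    rw [mem_filtration_iff]
    have hmn : i / 2 ≤ (i + 1) / 2 := by omega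
    have hm1 : (i + 1) / 2 ≤ i / 2 + 1 := by omega
    have hxi : x⁻¹ ∈ iwahori R := (iwahori R).inv_mem (filtration_subset_iwahori hx)
    have heq : (↑(x⁻¹) : Matrix (Fin 2) (Fin 2) R) - 1
        = -((↑(x⁻¹) : Matrix (Fin 2) (Fin 2) R) * ((x : Matrix (Fin 2) (Fin 2) R) - 1)) := by
      rw [mul_sub, mul_one, ← Units.val_mul, inv_mul_cancel, Units.val_one, neg_sub]
    rw [heq]
    exact (hx'.mul_left hmn hm1 hxi).neg

theorem mem_filtSubgroup_iff {i : ℕ} {g : GL (Fin 2) R} :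
    g ∈ filtSubgroup R i ↔ g ∈ iwahoriFiltration R i := Iff.rfl

theorem conj_mem_filt {i : ℕ} {g v : GL (Fin 2) R} (hg : g ∈ iwahori R)
    (hv : v ∈ iwahoriFiltration R i) : g * v * g⁻¹ ∈ iwahoriFiltration R i := by
  rw [mem_filtration_iff] at hv ⊢
  have hmn : i / 2 ≤ (i + 1) / 2 := by omega
  have hm1 : (i + 1) / 2 ≤ i / 2 + 1 := by omega
  have hg' : g⁻¹ ∈ iwahori R := (iwahori R).inv_mem hg
  have heq : (↑(g * v * g⁻¹) : Matrix (Fin 2) (Fin 2) R) - 1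
      = (g : Matrix (Fin 2) (Fin 2) R) * ((v : Matrix (Fin 2) (Fin 2) R) - 1)
          * (↑(g⁻¹) : Matrix (Fin 2) (Fin 2) R) := by
    rw [mul_sub, mul_one, sub_mul, ← Units.val_mul, ← Units.val_mul, ← Units.val_mul,
      mul_inv_cancel, Units.val_one]
  rw [heq]
  exact ((hv.mul_left hmn hm1 hg).mul_right hmn hm1 hg')

end Filt

end IndexAux
namespace IndexAux

section DVR
variable {R : Type*} [CommRing R] [IsDomain R] [IsDiscreteValuationRing R] {ϖ : R}

theorem pi_mem (hϖ : maximalIdeal R = Ideal.span {ϖ}) : ϖ ∈ maximalIdeal R := by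
  rw [hϖ]; exact Ideal.mem_span_singleton_self ϖ

theorem pi_ne_zero (hϖ : maximalIdeal R = Ideal.span {ϖ}) : ϖ ≠ 0 := by
  intro h
  exact IsDiscreteValuationRing.not_a_field R (by rw [hϖ, h]; simp)

theorem mem_pow_iff (hϖ : maximalIdeal R = Ideal.span {ϖ}) (k : ℕ) (x : R) :
    x ∈ maximalIdeal R ^ k ↔ ϖ ^ k ∣ x := by
  rw [hϖ, Ideal.span_singleton_pow, Ideal.mem_span_singleton]

/-- Division by the uniformizer. -/
noncomputable def divW (ϖ x : R) : R :=
  @dite _ (ϖ ∣ x) (Classical.dec _) (fun h => h.choose) fun _ => 0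

theorem divW_spec {x : R} (h : ϖ ∣ x) : ϖ * divW ϖ x = x := by
  rw [divW, dif_pos h]; exact h.choose_spec.symm

theorem divW_of_mul (hϖ : maximalIdeal R = Ideal.span {ϖ}) (c : R) : divW ϖ (ϖ * c) = c :=
  mul_left_cancel₀ (pi_ne_zero hϖ) (divW_spec ⟨c, rfl⟩)

theorem dvd_cancel (hϖ : maximalIdeal R = Ideal.span {ϖ}) {k : ℕ} {x : R}
    (h : ϖ ^ (k + 1) ∣ ϖ * x) : ϖ ^ k ∣ x := by
  obtain ⟨c, hc⟩ := h
  refine ⟨c, mul_left_cancel₀ (pi_ne_zero hϖ) ?_⟩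
  rw [hc]; ring

theorem divW_congr (hϖ : maximalIdeal R = Ideal.span {ϖ}) {x y : R}
    (hx : x ∈ maximalIdeal R) (hy : y ∈ maximalIdeal R) (k : ℕ) :
    divW ϖ x - divW ϖ y ∈ maximalIdeal R ^ k ↔ x - y ∈ maximalIdeal R ^ (k + 1) := by
  have hdx := divW_spec (ϖ := ϖ) (x := x) (by rwa [hϖ, Ideal.mem_span_singleton] at hx)
  have hdy := divW_spec (ϖ := ϖ) (x := y) (by rwa [hϖ, Ideal.mem_span_singleton] at hy)
  rw [mem_pow_iff hϖ, mem_pow_iff hϖ]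
  constructor
  · rintro ⟨c, hc⟩
    refine ⟨c, ?_⟩
    rw [← hdx, ← hdy, ← mul_sub, hc]; ring
  · intro h
    apply dvd_cancel hϖ
    rwa [mul_sub, hdx, hdy]

end DVR

section Torus
variable {R : Type*} [CommRing R] [IsLocalRing R] {ϖ : R}

theorem isUnit_of_sq (hϖm : ϖ ∈ maximalIdeal R) {A z : R}
    (h : IsUnit (A * A - ϖ * z)) : IsUnit A := by
  have hz : ϖ * z ∈ maximalIdeal R := Ideal.mul_mem_right _ _ hϖm
  have h2 : IsUnit (A * A - ϖ * z + ϖ * z) := isUnit_add_of_mem h hz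
  rw [sub_add_cancel] at h2
  exact isUnit_of_mul_isUnit_left h2

theorem one_mem_torus : (1 : GL (Fin 2) R) ∈ ramifiedTorus R ϖ :=
  ⟨1, 0, by simp [Matrix.one_fin_two]⟩

theorem torus_subset_iwahori (hϖm : ϖ ∈ maximalIdeal R) {g : GL (Fin 2) R}
    (hg : g ∈ ramifiedTorus R ϖ) : g ∈ iwahori R := by
  obtain ⟨a, b, hab⟩ := hg
  rw [mem_iwahori_iff, hab]
  simpa using Ideal.mul_mem_right b _ hϖm

theorem torus_det {g : GL (Fin 2) R} {a : Rˣ} {b : R}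
    (hab : (g : Matrix (Fin 2) (Fin 2) R) = !![(a : R), b; ϖ * b, (a : R)]) :
    IsUnit ((a : R) * (a : R) - ϖ * (b * b)) := by
  have h := (Matrix.isUnit_iff_isUnit_det _).1 g.isUnit
  rw [hab, Matrix.det_fin_two_of] at h
  have : (a : R) * (a : R) - ϖ * (b * b) = (a : R) * (a : R) - b * (ϖ * b) := by ring
  rwa [this]

theorem mul_mem_torus (hϖm : ϖ ∈ maximalIdeal R) {x y : GL (Fin 2) R} (hx : x ∈ ramifiedTorus R ϖ)
    (hy : y ∈ ramifiedTorus R ϖ) : x * y ∈ ramifiedTorus R ϖ := by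
  obtain ⟨a, b, hab⟩ := hx
  obtain ⟨c, d, hcd⟩ := hy
  have hval : (↑(x * y) : Matrix (Fin 2) (Fin 2) R)
      = !![(a : R) * c + ϖ * (b * d), (a : R) * d + b * c;
           ϖ * ((a : R) * d + b * c), (a : R) * c + ϖ * (b * d)] := by
    rw [Units.val_mul, hab, hcd]
    ext i j
    fin_cases i <;> fin_cases j <;> simp [Matrix.mul_apply, Fin.sum_univ_two] <;> ring
  have hdet : IsUnit (((a : R) * c + ϖ * (b * d)) * ((a : R) * c + ϖ * (b * d))
      - ϖ * (((a:R) * d + b * c) * ((a:R) * d + b * c))) := by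
    have h := (Matrix.isUnit_iff_isUnit_det _).1 (x * y).isUnit
    rw [hval, Matrix.det_fin_two_of] at h
    have : ((a : R) * c + ϖ * (b * d)) * ((a : R) * c + ϖ * (b * d))
        - ϖ * (((a:R) * d + b * c) * ((a:R) * d + b * c))
        = ((a : R) * c + ϖ * (b * d)) * ((a : R) * c + ϖ * (b * d))
        - ((a:R) * d + b * c) * (ϖ * ((a:R) * d + b * c)) := by ring
    rwa [this]
  have hA : IsUnit ((a : R) * c + ϖ * (b * d)) := isUnit_of_sq hϖm hdet
  exact ⟨hA.unit, (a : R) * d + b * c, by rw [hval, hA.unit_spec]⟩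

end Torus

end IndexAux
namespace IndexAux

section Torus2
variable {R : Type*} [CommRing R] [IsLocalRing R] {ϖ : R}

theorem inv_mem_torus {x : GL (Fin 2) R} (hx : x ∈ ramifiedTorus R ϖ) :
    x⁻¹ ∈ ramifiedTorus R ϖ := by
  obtain ⟨a, b, hab⟩ := hx
  have hdet := torus_det hab
  obtain ⟨e, he⟩ := hdet.exists_right_inv
  have hM : (x : Matrix (Fin 2) (Fin 2) R) * !![e * a, e * (-b); ϖ * (e * (-b)), e * a]
      = 1 := by
    rw [hab]
    ext i j
    fin_cases i <;> fin_cases j <;>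
      simp [Matrix.mul_apply, Fin.sum_univ_two, Matrix.one_apply] <;>
      first | ring1 | linear_combination he | linear_combination -he
  have hval : (↑(x⁻¹) : Matrix (Fin 2) (Fin 2) R)
      = !![e * a, e * (-b); ϖ * (e * (-b)), e * a] := by
    calc (↑(x⁻¹) : Matrix (Fin 2) (Fin 2) R)
        = (↑(x⁻¹) : Matrix (Fin 2) (Fin 2) R) * ((x : Matrix (Fin 2) (Fin 2) R)
            * !![e * a, e * (-b); ϖ * (e * (-b)), e * a]) := by rw [hM, mul_one]
      _ = ((↑(x⁻¹) : Matrix (Fin 2) (Fin 2) R) * (x : Matrix (Fin 2) (Fin 2) R))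
            * !![e * a, e * (-b); ϖ * (e * (-b)), e * a] := by rw [mul_assoc]
      _ = !![e * a, e * (-b); ϖ * (e * (-b)), e * a] := by
            rw [← Units.val_mul, inv_mul_cancel, Units.val_one, one_mul]
  have heu : IsUnit e :=
    IsUnit.of_mul_eq_one (a := e) ((a : R) * a - ϖ * (b * b)) (by linear_combination he)
  have hea : IsUnit (e * (a : R)) := heu.mul a.isUnit
  exact ⟨hea.unit, e * (-b), by rw [hval, hea.unit_spec]⟩

end Torus2

end IndexAux
namespace IndexAux

section TV
variable {R : Type*} [CommRing R] [IsLocalRing R] {ϖ : R}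

theorem torus_approx (hϖm : ϖ ∈ maximalIdeal R) {i : ℕ} {h : GL (Fin 2) R}
    (hh : h ∈ ramifiedTorus R ϖ * iwahoriFiltration R i) :
    ∃ (a : Rˣ) (b : R), entP ((i + 1) / 2) (i / 2)
      ((h : Matrix (Fin 2) (Fin 2) R) - !![(a : R), b; ϖ * b, (a : R)]) := by
  obtain ⟨t, ht, v, hv, rfl⟩ := hh
  obtain ⟨a, b, hab⟩ := ht
  have hv' := mem_filtration_iff.1 hv
  have hmn : i / 2 ≤ (i + 1) / 2 := by omega
  have hm1 : (i + 1) / 2 ≤ i / 2 + 1 := by omega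
  have ht10 : (t : Matrix (Fin 2) (Fin 2) R) 1 0 ∈ maximalIdeal R := by
    rw [hab]
    simpa using Ideal.mul_mem_right b _ hϖm
  refine ⟨a, b, ?_⟩
  have heq : (↑(t * v) : Matrix (Fin 2) (Fin 2) R) - !![(a : R), b; ϖ * b, (a : R)]
      = (t : Matrix (Fin 2) (Fin 2) R) * ((v : Matrix (Fin 2) (Fin 2) R) - 1) := by
    rw [Units.val_mul, mul_sub, mul_one, hab]
  rw [heq]
  exact hv'.mul_left hmn hm1 ht10

/-- The subgroup `T·Vⁱ`. -/
def tvGroup (R : Type*) [CommRing R] [IsLocalRing R] (ϖ : R)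
    (hϖm : ϖ ∈ maximalIdeal R) (i : ℕ) : Subgroup (GL (Fin 2) R) where
  carrier := ramifiedTorus R ϖ * iwahoriFiltration R i
  one_mem' := ⟨1, one_mem_torus, 1, (filtSubgroup R i).one_mem, mul_one 1⟩
  mul_mem' := by
    rintro x y ⟨t, ht, v, hv, rfl⟩ ⟨s, hs, w, hw, rfl⟩
    refine ⟨t * s, mul_mem_torus hϖm ht hs, (s⁻¹ * v * s) * w, ?_, by group⟩
    have hs' : s⁻¹ ∈ iwahori R := (iwahori R).inv_mem (torus_subset_iwahori hϖm hs)
    have hconj : s⁻¹ * v * (s⁻¹)⁻¹ ∈ iwahoriFiltration R i := conj_mem_filt hs' hv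
    rw [inv_inv] at hconj
    exact (filtSubgroup R i).mul_mem hconj hw
  inv_mem' := by
    rintro x ⟨t, ht, v, hv, rfl⟩
    refine ⟨t⁻¹, inv_mem_torus ht, t * v⁻¹ * t⁻¹, ?_, by group⟩
    exact conj_mem_filt (torus_subset_iwahori hϖm ht) ((filtSubgroup R i).inv_mem hv)

theorem mem_tvGroup_iff {hϖm : ϖ ∈ maximalIdeal R} {i : ℕ} {g : GL (Fin 2) R} :
    g ∈ tvGroup R ϖ hϖm i ↔ g ∈ ramifiedTorus R ϖ * iwahoriFiltration R i := Iff.rfl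

end TV

end IndexAux
namespace IndexAux

/-- Bijection between a coset space and an invariant of cosets. -/
noncomputable def quotEquiv {G : Type*} [Group G] (P : Subgroup G) {X : Type*} (f : G → X)
    (hf : ∀ a b : G, f a = f b ↔ a⁻¹ * b ∈ P) (hs : Function.Surjective f) :
    (G ⧸ P) ≃ X := by
  refine Equiv.ofBijective (fun z => Quotient.liftOn' z f ?_) ⟨?_, ?_⟩
  · intro a b h
    exact (hf a b).2 (QuotientGroup.leftRel_apply.1 h)
  · intro z w
    induction z using Quotient.inductionOn'
    induction w using Quotient.inductionOn'
    intro h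
    exact Quotient.sound' (QuotientGroup.leftRel_apply.2 ((hf _ _).1 h))
  · intro x
    obtain ⟨a, ha⟩ := hs x
    exact ⟨QuotientGroup.mk a, ha⟩

section Card
variable {R : Type*} [CommRing R] [IsDomain R] [IsDiscreteValuationRing R]
  [Finite (ResidueField R)] {q : ℕ}

theorem cardQ (hq : Nat.card (ResidueField R) = q) (k : ℕ) : Nat.card (R ⧸ maximalIdeal R ^ k) = q ^ k := by
  haveI : (maximalIdeal R).IsPrime := (maximalIdeal.isMaximal R).isPrime
  have h := cardQuot_pow_of_prime (P := maximalIdeal R)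
    (IsDiscreteValuationRing.not_a_field R) (i := k)
  rw [Submodule.cardQuot_apply, Submodule.cardQuot_apply] at h
  have h2 : Nat.card (R ⧸ maximalIdeal R) = q := hq
  rw [h, h2]

theorem two_le_q (hq : Nat.card (ResidueField R) = q) : 2 ≤ q := by
  rw [← hq]
  exact Finite.one_lt_card_iff_nontrivial.2 inferInstance

variable {ϖ : R}

theorem cardNonUnits (hq : Nat.card (ResidueField R) = q)
    (hϖ : maximalIdeal R = Ideal.span {ϖ}) (k : ℕ) :
    Nat.card {x : R ⧸ maximalIdeal R ^ (k + 1) // ¬IsUnit x} = q ^ k := by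
  have hϖ0 := pi_ne_zero hϖ
  -- the linear map `x ↦ mk (x * ϖ)`
  let f0 : R →ₗ[R] R ⧸ maximalIdeal R ^ (k + 1) :=
    (maximalIdeal R ^ (k + 1)).mkQ.comp (LinearMap.toSpanSingleton R R ϖ)
  have hle : maximalIdeal R ^ k ≤ LinearMap.ker f0 := by
    intro x hx
    have : x • ϖ ∈ maximalIdeal R ^ (k + 1) := by
      rw [smul_eq_mul, mem_pow_iff hϖ]
      obtain ⟨c, hc⟩ := (mem_pow_iff hϖ k x).1 hx
      exact ⟨c, by rw [hc]; ring⟩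
    simp only [f0, LinearMap.mem_ker, LinearMap.comp_apply,
      LinearMap.toSpanSingleton_apply, Submodule.mkQ_apply]
    rw [Submodule.Quotient.mk_eq_zero]
    exact this
  let g0 := Submodule.liftQ _ f0 hle
  have hg0 : ∀ x : R, g0 (Submodule.Quotient.mk x) = Ideal.Quotient.mk _ (x * ϖ) := by
    intro x
    rw [Submodule.liftQ_apply]
    simp only [f0, LinearMap.comp_apply, LinearMap.toSpanSingleton_apply,
      Submodule.mkQ_apply, smul_eq_mul]
    rw [Ideal.Quotient.mk_eq_mk]
  have hϖnu : ¬IsUnit ϖ := by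
    intro hu
    exact mem_nonunits_iff.1 ((mem_maximalIdeal _).1 (pi_mem hϖ)) hu
  have hnu : ∀ z : R ⧸ maximalIdeal R ^ k, ¬IsUnit (g0 z) := by
    intro z
    obtain ⟨x, rfl⟩ := Submodule.Quotient.mk_surjective _ z
    rw [hg0]
    intro hu
    exact hϖnu (isUnit_of_mul_isUnit_right (isUnit_of_mk_isUnit (by omega) hu))
  let e : (R ⧸ maximalIdeal R ^ k) → {x : R ⧸ maximalIdeal R ^ (k + 1) // ¬IsUnit x} :=
    fun z => ⟨g0 z, hnu z⟩
  have hbij : Function.Bijective e := by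
    constructor
    · intro z w h
      obtain ⟨x, rfl⟩ := Submodule.Quotient.mk_surjective _ z
      obtain ⟨y, rfl⟩ := Submodule.Quotient.mk_surjective _ w
      have h1 : g0 (Submodule.Quotient.mk x) = g0 (Submodule.Quotient.mk y) :=
        congrArg Subtype.val h
      rw [hg0, hg0] at h1
      have h2 : x * ϖ - y * ϖ ∈ maximalIdeal R ^ (k + 1) :=
        (Ideal.Quotient.mk_eq_mk_iff_sub_mem _ _).1 h1
      rw [mem_pow_iff hϖ] at h2
      have h3 : ϖ ^ k ∣ x - y := dvd_cancel hϖ (by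
        rw [show ϖ * (x - y) = x * ϖ - y * ϖ from by ring]; exact h2)
      rw [Submodule.Quotient.eq]
      rwa [← mem_pow_iff hϖ] at h3
    · rintro ⟨y, hy⟩
      obtain ⟨y0, rfl⟩ := Ideal.Quotient.mk_surjective y
      have hy0 : y0 ∈ maximalIdeal R := by
        by_contra hm
        have hu : IsUnit y0 := by
          by_contra h2
          exact hm ((mem_maximalIdeal _).2 (mem_nonunits_iff.2 h2))
        exact hy (RingHom.isUnit_map _ hu)
      obtain ⟨c, hc⟩ := (Ideal.mem_span_singleton).1 (hϖ ▸ hy0)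
      refine ⟨Submodule.Quotient.mk c, Subtype.ext ?_⟩
      show g0 (Submodule.Quotient.mk c) = _
      rw [hg0, mul_comm c ϖ, ← hc]
  rw [← Nat.card_congr (Equiv.ofBijective e hbij)]
  exact cardQ hq k

end Card

end IndexAux
namespace IndexAux

theorem sub_mem_iff {R : Type*} [CommRing R] {I : Ideal R} {x y : R} :
    x - y ∈ I ↔ y - x ∈ I :=
  ⟨fun h => by simpa using neg_mem h, fun h => by simpa using neg_mem h⟩

theorem coe_mk'' {R : Type*} [CommRing R] (A : Matrix (Fin 2) (Fin 2) R)
    (h : IsUnit A.det) :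
    ((Matrix.GeneralLinearGroup.mk'' A h : GL (Fin 2) R) : Matrix (Fin 2) (Fin 2) R) = A := rfl

section Card2
variable {R : Type*} [CommRing R] [IsDomain R] [IsDiscreteValuationRing R]
  [Finite (ResidueField R)] {q : ℕ} {ϖ : R}

theorem cardUnits (hq : Nat.card (ResidueField R) = q)
    (hϖ : maximalIdeal R = Ideal.span {ϖ}) (k : ℕ) :
    Nat.card {x : R ⧸ maximalIdeal R ^ (k + 1) // IsUnit x} = (q - 1) * q ^ k := by
  classical
  have h2 : 2 ≤ q := two_le_q hq
  haveI : Finite (R ⧸ maximalIdeal R ^ (k + 1)) := by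
    apply Nat.finite_of_card_ne_zero
    rw [cardQ hq]
    positivity
  have hsplit : Nat.card {x : R ⧸ maximalIdeal R ^ (k + 1) // IsUnit x}
      + Nat.card {x : R ⧸ maximalIdeal R ^ (k + 1) // ¬IsUnit x} = q ^ (k + 1) := by
    calc Nat.card {x : R ⧸ maximalIdeal R ^ (k + 1) // IsUnit x}
          + Nat.card {x : R ⧸ maximalIdeal R ^ (k + 1) // ¬IsUnit x}
        = Nat.card ({x : R ⧸ maximalIdeal R ^ (k + 1) // IsUnit x}
            ⊕ {x : R ⧸ maximalIdeal R ^ (k + 1) // ¬IsUnit x}) := Nat.card_sum.symm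
      _ = Nat.card (R ⧸ maximalIdeal R ^ (k + 1)) := Nat.card_congr (Equiv.sumCompl _)
      _ = q ^ (k + 1) := cardQ hq _
  rw [cardNonUnits hq hϖ k] at hsplit
  have hp : q ^ (k + 1) = q ^ k * q := pow_succ q k
  have hsub : (q - 1) * q ^ k = q * q ^ k - q ^ k := by rw [Nat.sub_mul, one_mul]
  have hc : q * q ^ k = q ^ k * q := mul_comm _ _
  omega

end Card2

end IndexAux

open IndexAux

/-- Let `R` be a discrete valuation ring with maximal ideal `(ϖ)` and finite residue field
of odd cardinality `q`.  For every `i ≥ 1` the set `T·Vⁱ` is a subgroup of the Iwahori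
subgroup `I`, of index `(q − 1)·q^(i−1)` in `I`. -/
theorem index_ramifiedTorus_mul_iwahoriFiltration (R : Type*) [CommRing R] [IsDomain R]
    [IsDiscreteValuationRing R] [Finite (ResidueField R)]
    (q : ℕ) (hq : Nat.card (ResidueField R) = q) (hodd : Odd q)
    (ϖ : R) (hϖ : maximalIdeal R = Ideal.span {ϖ})
    (i : ℕ) (hi : 1 ≤ i) :
    ∃ H : Subgroup (GL (Fin 2) R),
      (H : Set (GL (Fin 2) R)) = ramifiedTorus R ϖ * iwahoriFiltration R i ∧
      H ≤ iwahori R ∧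
      (H.subgroupOf (iwahori R)).index = (q - 1) * q ^ (i - 1) := by
  classical
  have hϖm : ϖ ∈ maximalIdeal R := pi_mem hϖ
  refine ⟨tvGroup R ϖ hϖm i, rfl, ?_, ?_⟩
  · rintro g ⟨t, ht, v, hv, rfl⟩
    exact mul_mem (torus_subset_iwahori hϖm ht) (filtration_subset_iwahori hv)
  set Nn := (filtSubgroup R i).subgroupOf (iwahori R) with hNndef
  set K := (tvGroup R ϖ hϖm i).subgroupOf (iwahori R) with hKdef
  have hNK : Nn ≤ K := by
    intro g hg
    rw [hNndef, Subgroup.mem_subgroupOf] at hg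
    rw [hKdef, Subgroup.mem_subgroupOf]
    exact ⟨1, one_mem_torus, ↑g, hg, one_mul _⟩
  -- the invariant map on the Iwahori subgroup
  have two_le : 2 ≤ q := two_le_q hq
  set fX : (iwahori R) → ({x : R ⧸ maximalIdeal R ^ ((i + 1) / 2) // IsUnit x}
      × {x : R ⧸ maximalIdeal R ^ ((i + 1) / 2) // IsUnit x}
      × (R ⧸ maximalIdeal R ^ (i / 2)) × (R ⧸ maximalIdeal R ^ (i / 2))) := fun g =>
    (⟨Ideal.Quotient.mk _ (((g : GL (Fin 2) R)) 0 0),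
        RingHom.isUnit_map _ (isUnit_entries (mem_iwahori_iff.1 g.2)).1⟩,
     ⟨Ideal.Quotient.mk _ (((g : GL (Fin 2) R)) 1 1),
        RingHom.isUnit_map _ (isUnit_entries (mem_iwahori_iff.1 g.2)).2⟩,
     Ideal.Quotient.mk _ (((g : GL (Fin 2) R)) 0 1),
     Ideal.Quotient.mk _ (divW ϖ (((g : GL (Fin 2) R)) 1 0))) with hfXdef
  have hfX : ∀ a b : (iwahori R), fX a = fX b ↔ a⁻¹ * b ∈ Nn := by
    intro a b
    have hco : ((a⁻¹ * b : (iwahori R)) : GL (Fin 2) R)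
        = ((a : GL (Fin 2) R))⁻¹ * (b : GL (Fin 2) R) := rfl
    have ha10 := mem_iwahori_iff.1 a.2
    have hb10 := mem_iwahori_iff.1 b.2
    rw [hNndef, Subgroup.mem_subgroupOf]
    have hmem : ((a⁻¹ * b : (iwahori R)) : GL (Fin 2) R) ∈ filtSubgroup R i
        ↔ entP ((i + 1) / 2) (i / 2)
            ((b : GL (Fin 2) R) - (a : GL (Fin 2) R) : Matrix (Fin 2) (Fin 2) R) := by
      rw [mem_filtSubgroup_iff, hco, inv_mul_mem_filtration_iff a.2]
    rw [hmem]
    simp only [hfXdef, Prod.mk.injEq, Subtype.mk.injEq]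
    constructor
    · rintro ⟨h1, h2, h3, h4⟩
      refine ⟨?_, ?_, ?_, ?_⟩ <;> rw [Matrix.sub_apply]
      · exact sub_mem_iff.1 ((Ideal.Quotient.mk_eq_mk_iff_sub_mem _ _).1 h1)
      · exact sub_mem_iff.1 ((Ideal.Quotient.mk_eq_mk_iff_sub_mem _ _).1 h3)
      · exact sub_mem_iff.1 ((divW_congr hϖ ha10 hb10 (i / 2)).1
          ((Ideal.Quotient.mk_eq_mk_iff_sub_mem _ _).1 h4))
      · exact sub_mem_iff.1 ((Ideal.Quotient.mk_eq_mk_iff_sub_mem _ _).1 h2)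
    · intro h
      obtain ⟨e1, e2, e3, e4⟩ := h
      rw [Matrix.sub_apply] at e1 e2 e3 e4
      refine ⟨?_, ?_, ?_, ?_⟩
      · exact (Ideal.Quotient.mk_eq_mk_iff_sub_mem _ _).2 (sub_mem_iff.1 e1)
      · exact (Ideal.Quotient.mk_eq_mk_iff_sub_mem _ _).2 (sub_mem_iff.1 e4)
      · exact (Ideal.Quotient.mk_eq_mk_iff_sub_mem _ _).2 (sub_mem_iff.1 e2)
      · exact (Ideal.Quotient.mk_eq_mk_iff_sub_mem _ _).2
          ((divW_congr hϖ ha10 hb10 (i / 2)).2 (sub_mem_iff.1 e3))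
  have hfXs : Function.Surjective fX := by
    rintro ⟨⟨u, hu⟩, ⟨w, hw⟩, b1, c1⟩
    obtain ⟨x, rfl⟩ := Ideal.Quotient.mk_surjective u
    obtain ⟨y, rfl⟩ := Ideal.Quotient.mk_surjective w
    obtain ⟨b0, rfl⟩ := Ideal.Quotient.mk_surjective b1
    obtain ⟨c0, rfl⟩ := Ideal.Quotient.mk_surjective c1
    have hx : IsUnit x := isUnit_of_mk_isUnit (by omega) hu
    have hy : IsUnit y := isUnit_of_mk_isUnit (by omega) hw
    have hdet : IsUnit (Matrix.det !![x, b0; ϖ * c0, y]) := by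
      rw [Matrix.det_fin_two_of,
        show x * y - b0 * (ϖ * c0) = x * y + -(ϖ * (b0 * c0)) from by ring]
      exact isUnit_add_of_mem (hx.mul hy) (neg_mem (Ideal.mul_mem_right _ _ hϖm))
    have hgI : Matrix.GeneralLinearGroup.mk'' _ hdet ∈ iwahori R := by
      rw [mem_iwahori_iff, coe_mk'']
      simpa using Ideal.mul_mem_right c0 _ hϖm
    refine ⟨⟨Matrix.GeneralLinearGroup.mk'' _ hdet, hgI⟩, ?_⟩
    simp only [hfXdef, Prod.mk.injEq, Subtype.mk.injEq]
    refine ⟨?_, ?_, ?_, ?_⟩ <;> rw [coe_mk'']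
    · norm_num
    · norm_num
    · norm_num
    · rw [show (!![x, b0; ϖ * c0, y] : Matrix (Fin 2) (Fin 2) R) 1 0 = ϖ * c0 from by norm_num,
        divW_of_mul hϖ]
  have hm' : (i + 1) / 2 = ((i + 1) / 2 - 1) + 1 := by omega
  have hA : Nn.index = ((q - 1) * q ^ ((i + 1) / 2 - 1))
      * (((q - 1) * q ^ ((i + 1) / 2 - 1)) * (q ^ (i / 2) * q ^ (i / 2))) := by
    rw [Subgroup.index_eq_card, Nat.card_congr (quotEquiv Nn fX hfX hfXs),
      Nat.card_prod, Nat.card_prod, Nat.card_prod, hm', cardUnits hq hϖ, cardQ hq]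
    simp
  -- the invariant map on K
  set fY : K → ({x : R ⧸ maximalIdeal R ^ ((i + 1) / 2) // IsUnit x}
      × (R ⧸ maximalIdeal R ^ (i / 2))) := fun k =>
    (⟨Ideal.Quotient.mk _ ((((k : (iwahori R)) : GL (Fin 2) R)) 0 0),
        RingHom.isUnit_map _ (isUnit_entries (mem_iwahori_iff.1 (k : (iwahori R)).2)).1⟩,
     Ideal.Quotient.mk _ (divW ϖ ((((k : (iwahori R)) : GL (Fin 2) R)) 1 0))) with hfYdef
  have hfY : ∀ a b : K, fY a = fY b ↔ a⁻¹ * b ∈ Nn.subgroupOf K := by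
    intro a b
    have haI := (a : (iwahori R)).2
    have hbI := (b : (iwahori R)).2
    have ha10 := mem_iwahori_iff.1 haI
    have hb10 := mem_iwahori_iff.1 hbI
    set A : Matrix (Fin 2) (Fin 2) R := (((a : (iwahori R)) : GL (Fin 2) R) :
      Matrix (Fin 2) (Fin 2) R) with hAdef
    set B : Matrix (Fin 2) (Fin 2) R := (((b : (iwahori R)) : GL (Fin 2) R) :
      Matrix (Fin 2) (Fin 2) R) with hBdef
    have hco : (((a⁻¹ * b : K) : (iwahori R)) : GL (Fin 2) R)
        = (((a : (iwahori R)) : GL (Fin 2) R))⁻¹ * ((b : (iwahori R)) : GL (Fin 2) R) := rfl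
    have hmem : a⁻¹ * b ∈ Nn.subgroupOf K ↔ entP ((i + 1) / 2) (i / 2) (B - A) := by
      rw [Subgroup.mem_subgroupOf, hNndef, Subgroup.mem_subgroupOf, mem_filtSubgroup_iff, hco,
        inv_mul_mem_filtration_iff haI]
    -- torus approximations
    have haH : ((a : (iwahori R)) : GL (Fin 2) R)
        ∈ ramifiedTorus R ϖ * iwahoriFiltration R i := by
      exact Subgroup.mem_subgroupOf.1 a.2
    have hbH : ((b : (iwahori R)) : GL (Fin 2) R)
        ∈ ramifiedTorus R ϖ * iwahoriFiltration R i := by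
      exact Subgroup.mem_subgroupOf.1 b.2
    obtain ⟨u1, b1, happ1⟩ := torus_approx hϖm haH
    obtain ⟨u2, b2, happ2⟩ := torus_approx hϖm hbH
    have t1_00 : A 0 0 - (u1 : R) ∈ maximalIdeal R ^ ((i + 1) / 2) := by
      have h := happ1.1; rw [Matrix.sub_apply] at h; simpa using h
    have t1_01 : A 0 1 - b1 ∈ maximalIdeal R ^ (i / 2) := by
      have h := happ1.2.1; rw [Matrix.sub_apply] at h; simpa using h
    have t1_10 : A 1 0 - ϖ * b1 ∈ maximalIdeal R ^ (i / 2 + 1) := by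
      have h := happ1.2.2.1; rw [Matrix.sub_apply] at h; simpa using h
    have t1_11 : A 1 1 - (u1 : R) ∈ maximalIdeal R ^ ((i + 1) / 2) := by
      have h := happ1.2.2.2; rw [Matrix.sub_apply] at h; simpa using h
    have t2_00 : B 0 0 - (u2 : R) ∈ maximalIdeal R ^ ((i + 1) / 2) := by
      have h := happ2.1; rw [Matrix.sub_apply] at h; simpa using h
    have t2_01 : B 0 1 - b2 ∈ maximalIdeal R ^ (i / 2) := by
      have h := happ2.2.1; rw [Matrix.sub_apply] at h; simpa using h
    have t2_10 : B 1 0 - ϖ * b2 ∈ maximalIdeal R ^ (i / 2 + 1) := by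
      have h := happ2.2.2.1; rw [Matrix.sub_apply] at h; simpa using h
    have t2_11 : B 1 1 - (u2 : R) ∈ maximalIdeal R ^ ((i + 1) / 2) := by
      have h := happ2.2.2.2; rw [Matrix.sub_apply] at h; simpa using h
    rw [hmem]
    simp only [hfYdef, Prod.mk.injEq, Subtype.mk.injEq]
    constructor
    · rintro ⟨h1, h2⟩
      have h00 : A 0 0 - B 0 0 ∈ maximalIdeal R ^ ((i + 1) / 2) :=
        (Ideal.Quotient.mk_eq_mk_iff_sub_mem _ _).1 h1
      have h10 : A 1 0 - B 1 0 ∈ maximalIdeal R ^ (i / 2 + 1) :=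
        (divW_congr hϖ ha10 hb10 _).1 ((Ideal.Quotient.mk_eq_mk_iff_sub_mem _ _).1 h2)
      have hBA00 : B 0 0 - A 0 0 ∈ maximalIdeal R ^ ((i + 1) / 2) := sub_mem_iff.1 h00
      have hBA10 : B 1 0 - A 1 0 ∈ maximalIdeal R ^ (i / 2 + 1) := sub_mem_iff.1 h10
      have hu21 : (u2 : R) - (u1 : R) ∈ maximalIdeal R ^ ((i + 1) / 2) := by
        rw [show (u2 : R) - (u1 : R)
            = -(B 0 0 - (u2 : R)) + (B 0 0 - A 0 0) + (A 0 0 - (u1 : R)) from by ring]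
        exact add_mem (add_mem (neg_mem t2_00) hBA00) t1_00
      have hb21 : b2 - b1 ∈ maximalIdeal R ^ (i / 2) := by
        have hϖb : ϖ * (b2 - b1) ∈ maximalIdeal R ^ (i / 2 + 1) := by
          rw [show ϖ * (b2 - b1)
              = -(B 1 0 - ϖ * b2) + (B 1 0 - A 1 0) + (A 1 0 - ϖ * b1) from by ring]
          exact add_mem (add_mem (neg_mem t2_10) hBA10) t1_10
        rw [mem_pow_iff hϖ] at hϖb ⊢
        exact dvd_cancel hϖ hϖb
      refine ⟨?_, ?_, ?_, ?_⟩ <;> rw [Matrix.sub_apply]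
      · exact hBA00
      · rw [show B 0 1 - A 0 1 = (B 0 1 - b2) + (b2 - b1) - (A 0 1 - b1) from by ring]
        exact sub_mem (add_mem t2_01 hb21) t1_01
      · exact hBA10
      · rw [show B 1 1 - A 1 1
            = (B 1 1 - (u2 : R)) + ((u2 : R) - (u1 : R)) - (A 1 1 - (u1 : R)) from by ring]
        exact sub_mem (add_mem t2_11 hu21) t1_11
    · intro h
      obtain ⟨e1, e2, e3, e4⟩ := h
      rw [Matrix.sub_apply] at e1 e3
      refine ⟨?_, ?_⟩
      · exact (Ideal.Quotient.mk_eq_mk_iff_sub_mem _ _).2 (sub_mem_iff.1 e1)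
      · exact (Ideal.Quotient.mk_eq_mk_iff_sub_mem _ _).2
          ((divW_congr hϖ ha10 hb10 _).2 (sub_mem_iff.1 e3))
  have hfYs : Function.Surjective fY := by
    rintro ⟨⟨u, hu⟩, c1⟩
    obtain ⟨x, rfl⟩ := Ideal.Quotient.mk_surjective u
    obtain ⟨c0, rfl⟩ := Ideal.Quotient.mk_surjective c1
    have hx : IsUnit x := isUnit_of_mk_isUnit (by omega) hu
    have hdet : IsUnit (Matrix.det !![x, c0; ϖ * c0, x]) := by
      rw [Matrix.det_fin_two_of,
        show x * x - c0 * (ϖ * c0) = x * x + -(ϖ * (c0 * c0)) from by ring]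
      exact isUnit_add_of_mem (hx.mul hx) (neg_mem (Ideal.mul_mem_right _ _ hϖm))
    have hgI : Matrix.GeneralLinearGroup.mk'' _ hdet ∈ iwahori R := by
      rw [mem_iwahori_iff, coe_mk'']
      simpa using Ideal.mul_mem_right c0 _ hϖm
    have hgT : Matrix.GeneralLinearGroup.mk'' _ hdet ∈ ramifiedTorus R ϖ := by
      refine ⟨hx.unit, c0, ?_⟩
      rw [hx.unit_spec, coe_mk'']
    have hgH : Matrix.GeneralLinearGroup.mk'' _ hdet
        ∈ ramifiedTorus R ϖ * iwahoriFiltration R i := by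
      refine ⟨_, hgT, 1, (filtSubgroup R i).one_mem, mul_one _⟩
    refine ⟨⟨⟨Matrix.GeneralLinearGroup.mk'' _ hdet, hgI⟩, ?_⟩, ?_⟩
    · exact Subgroup.mem_subgroupOf.2 hgH
    simp only [hfYdef, Prod.mk.injEq, Subtype.mk.injEq]
    constructor
    · rw [coe_mk'']
      norm_num
    · rw [coe_mk'',
        show (!![x, c0; ϖ * c0, x] : Matrix (Fin 2) (Fin 2) R) 1 0 = ϖ * c0 from by norm_num,
        divW_of_mul hϖ]
  have hB : Nn.relIndex K = (q - 1) * q ^ ((i + 1) / 2 - 1) * q ^ (i / 2) := by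
    have hrel : Nn.relIndex K = (Nn.subgroupOf K).index := rfl
    rw [hrel, Subgroup.index_eq_card,
      Nat.card_congr (quotEquiv (Nn.subgroupOf K) fY hfY hfYs), Nat.card_prod, hm',
      cardUnits hq hϖ, cardQ hq]
    simp
  have hrel := Subgroup.relIndex_mul_index hNK
  rw [hA, hB] at hrel
  have hBpos : 0 < (q - 1) * q ^ ((i + 1) / 2 - 1) * q ^ (i / 2) :=
    Nat.mul_pos (Nat.mul_pos (by omega) (Nat.pow_pos (by omega)))
      (Nat.pow_pos (by omega))
  have hsq : ((q - 1) * q ^ ((i + 1) / 2 - 1))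
      * (((q - 1) * q ^ ((i + 1) / 2 - 1)) * (q ^ (i / 2) * q ^ (i / 2)))
      = ((q - 1) * q ^ ((i + 1) / 2 - 1) * q ^ (i / 2))
        * ((q - 1) * q ^ ((i + 1) / 2 - 1) * q ^ (i / 2)) := by ring
  rw [hsq] at hrel
  have hKind : K.index = (q - 1) * q ^ ((i + 1) / 2 - 1) * q ^ (i / 2) :=
    Nat.eq_of_mul_eq_mul_left hBpos hrel
  rw [hKind, mul_assoc, ← pow_add,
    show (i + 1) / 2 - 1 + i / 2 = i - 1 from by omega]
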